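/- arXiv:2110.08166 — 3 statements merged into one kernel-verified Lean document; each statement's English description precedes it below -/
import Mathlib

section
/- The sequence A_L = (∑_{s=2}^{L+1} 1.73^{s-1}/((s-1)!)) / (∑_{t=1}^{L} 1.73^t/((t+1)!)) is strictly increasing in L. -/
open Real Finset

noncomputable def Nsum (L : ℕ) : ℝ := ∑ t ∈ Finset.Icc 1 L, (1.73 : ℝ) ^ t / (Nat.factorial t : ℝ)
noncomputable def Dsum (L : ℕ) : ℝ := ∑ t ∈ Finset.Icc 1 L, (1.73 : ℝ) ^ t / (Nat.factorial (t + 1) : ℝ)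

lemma reindex (L : ℕ) :
    (∑ s ∈ Finset.Icc 2 (L + 1), (1.73 : ℝ) ^ (s - 1) / (Nat.factorial (s - 1) : ℝ))
      = Nsum L := by
  induction L with
  | zero => simp [Nsum]
  | succ n ih =>
      rw [Finset.sum_Icc_succ_top (by omega), ih]
      simp only [Nsum]
      rw [Finset.sum_Icc_succ_top (by omega : 1 ≤ n + 1)]
      norm_num

lemma Dpos {L : ℕ} (hL : 1 ≤ L) : 0 < Dsum L := by
  apply Finset.sum_pos
  · intro t _
    positivity
  · exact ⟨1, by simp [Finset.mem_Icc, hL]⟩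

lemma key {L : ℕ} (hL : 1 ≤ L) : Nsum L < ((L : ℝ) + 2) * Dsum L := by
  rw [Dsum, Finset.mul_sum]
  apply Finset.sum_lt_sum_of_nonempty ⟨1, by simp [Finset.mem_Icc, hL]⟩
  intro t ht
  simp only [Finset.mem_Icc] at ht
  have hfac : (Nat.factorial (t + 1) : ℝ) = ((t : ℝ) + 1) * (Nat.factorial t : ℝ) := by
    rw [Nat.factorial_succ]; push_cast; ring
  have hfpos : (0 : ℝ) < (Nat.factorial t : ℝ) := by
    exact_mod_cast t.factorial_pos
  have hx : (0 : ℝ) < (1.73 : ℝ) ^ t / (Nat.factorial t : ℝ) := by positivity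
  have h1 : ((L : ℝ) + 2) * ((1.73 : ℝ) ^ t / (Nat.factorial (t + 1) : ℝ))
      = (((L : ℝ) + 2) / ((t : ℝ) + 1)) * ((1.73 : ℝ) ^ t / (Nat.factorial t : ℝ)) := by
    rw [hfac]; field_simp
  rw [h1]
  have h2 : (1 : ℝ) < ((L : ℝ) + 2) / ((t : ℝ) + 1) := by
    rw [one_lt_div (by positivity)]
    have : (t : ℝ) ≤ (L : ℝ) := by exact_mod_cast ht.2
    linarith
  nlinarith

lemma step {L : ℕ} (hL : 1 ≤ L) : Nsum L / Dsum L < Nsum (L + 1) / Dsum (L + 1) := by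
  rw [div_lt_div_iff₀ (Dpos hL) (Dpos (by omega))]
  have hN : Nsum (L + 1) = Nsum L + (1.73 : ℝ) ^ (L + 1) / (Nat.factorial (L + 1) : ℝ) := by
    rw [Nsum, Finset.sum_Icc_succ_top (by omega : 1 ≤ L + 1)]; rfl
  have hD : Dsum (L + 1) = Dsum L + (1.73 : ℝ) ^ (L + 1) / (Nat.factorial (L + 2) : ℝ) := by
    rw [Dsum, Finset.sum_Icc_succ_top (by omega : 1 ≤ L + 1)]; rfl
  have hfac : (Nat.factorial (L + 2) : ℝ) = ((L : ℝ) + 2) * (Nat.factorial (L + 1) : ℝ) := by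
    rw [show L + 2 = (L + 1) + 1 from rfl, Nat.factorial_succ]; push_cast; ring
  set c : ℝ := (1.73 : ℝ) ^ (L + 1) / (Nat.factorial (L + 1) : ℝ) with hc
  have hcpos : 0 < c := by rw [hc]; positivity
  have h2 : (1.73 : ℝ) ^ (L + 1) / (Nat.factorial (L + 2) : ℝ) = c / ((L : ℝ) + 2) := by
    rw [hfac, hc]; field_simp
  rw [hN, hD, h2]
  have hk := key hL
  have hD0 := Dpos hL
  have hL2 : (0 : ℝ) < (L : ℝ) + 2 := by positivity
  rw [show Nsum L * (Dsum L + c / ((L : ℝ) + 2))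
      = Nsum L * Dsum L + Nsum L * c / ((L : ℝ) + 2) by ring,
    show (Nsum L + c) * Dsum L = Nsum L * Dsum L + c * Dsum L by ring]
  have : Nsum L * c < ((L : ℝ) + 2) * Dsum L * c :=
    mul_lt_mul_of_pos_right hk hcpos
  have h3 : Nsum L * c / ((L : ℝ) + 2) < c * Dsum L := by
    rw [div_lt_iff₀ hL2]
    nlinarith
  linarith

theorem stmt_10 :
    StrictMonoOn
      (fun L : ℕ =>
        (∑ s ∈ Finset.Icc 2 (L + 1), (1.73 : ℝ) ^ (s - 1) / (Nat.factorial (s - 1) : ℝ)) /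
        (∑ t ∈ Finset.Icc 1 L, (1.73 : ℝ) ^ t / (Nat.factorial (t + 1) : ℝ)))
      (Set.Ici 1) := by
  have hfun : ∀ L : ℕ,
      (∑ s ∈ Finset.Icc 2 (L + 1), (1.73 : ℝ) ^ (s - 1) / (Nat.factorial (s - 1) : ℝ)) /
        (∑ t ∈ Finset.Icc 1 L, (1.73 : ℝ) ^ t / (Nat.factorial (t + 1) : ℝ))
      = Nsum L / Dsum L := by
    intro L; rw [reindex]; rfl
  intro a ha b hb hab
  simp only [Set.mem_Ici] at ha hb
  simp only [hfun]
  clear hb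
  induction b, hab using Nat.le_induction with
  | base => exact step ha
  | succ b hb ih => exact lt_trans ih (step (by omega))
end

section
/- Define r_L = ΔA_L/|ΔB_L| where ΔA_L = A_{L+1} - A_L and ΔB_L = B_{L+1} - B_L, with A_L, B_L as above (a = 1.73). Then r_L = ∑_{i=1}^{L} a^i (L + 1 - i)/((i+1)!), and this sequence is strictly increasing in L. -/
open Real Finset

set_option maxHeartbeats 1000000

theorem stmt_12
    (A B r : ℕ → ℝ)
    (hA : ∀ L, A L = (∑ s ∈ Finset.Icc 2 (L + 1),
        (1.73 : ℝ) ^ (s - 1) / (Nat.factorial (s - 1) : ℝ)) /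
        (∑ t ∈ Finset.Icc 1 L, (1.73 : ℝ) ^ t / (Nat.factorial (t + 1) : ℝ)))
    (hB : ∀ L, B L = 1 / ∑ t ∈ Finset.Icc 1 L, (1.73 : ℝ) ^ t / (Nat.factorial (t + 1) : ℝ))
    (hr : ∀ L, r L = (A (L + 1) - A L) / |B (L + 1) - B L|) :
    (∀ L : ℕ, 1 ≤ L →
      r L = ∑ i ∈ Finset.Icc 1 L,
        (1.73 : ℝ) ^ i * ((L : ℝ) + 1 - (i : ℝ)) / (Nat.factorial (i + 1) : ℝ)) ∧
    StrictMonoOn r (Set.Ici 1) := by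
  set a : ℝ := 1.73 with ha
  have ha0 : (0:ℝ) < a := by norm_num [ha]
  set c : ℕ → ℝ := fun L => ∑ t ∈ Finset.Icc 1 L, a ^ t / (Nat.factorial (t + 1) : ℝ) with hc
  set n : ℕ → ℝ := fun L => ∑ t ∈ Finset.Icc 1 L, a ^ t / (Nat.factorial t : ℝ) with hn
  -- reindexing
  have hAn : ∀ L, A L = n L / c L := by
    intro L
    rw [hA L]
    congr 1
    have : Finset.Icc 2 (L+1) = Finset.map (addRightEmbedding 1) (Finset.Icc 1 L) := by
      rw [Finset.map_add_right_Icc]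
    rw [this, Finset.sum_map]
    simp [addRightEmbedding]
    rfl
  have hcpos : ∀ L, 1 ≤ L → 0 < c L := by
    intro L hL
    apply Finset.sum_pos
    · intro i hi
      positivity
    · exact ⟨1, by simp [Finset.mem_Icc, hL]⟩
  have hcsucc : ∀ L, c (L+1) = c L + a ^ (L+1) / (Nat.factorial (L+2) : ℝ) := by
    intro L
    simp only [hc]
    rw [Finset.sum_Icc_succ_top (by omega)]
  have hnsucc : ∀ L, n (L+1) = n L + a ^ (L+1) / (Nat.factorial (L+1) : ℝ) := by
    intro L
    simp only [hn]
    rw [Finset.sum_Icc_succ_top (by omega)]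
  -- key formula
  have key : ∀ L, 1 ≤ L → r L = ∑ i ∈ Finset.Icc 1 L,
      a ^ i * ((L : ℝ) + 1 - (i : ℝ)) / (Nat.factorial (i + 1) : ℝ) := by
    intro L hL
    have hcL := hcpos L hL
    have hcL1 := hcpos (L+1) (by omega)
    have hd : (0:ℝ) < a ^ (L+1) / (Nat.factorial (L+2) : ℝ) := by positivity
    have hBdiff : B (L+1) - B L = -(a ^ (L+1) / (Nat.factorial (L+2) : ℝ)) / (c L * c (L+1)) := by
      rw [hB, hB]
      rw [show (∑ t ∈ Finset.Icc 1 (L+1), a ^ t / (Nat.factorial (t + 1) : ℝ)) = c (L+1) from rfl,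
        show (∑ t ∈ Finset.Icc 1 L, a ^ t / (Nat.factorial (t + 1) : ℝ)) = c L from rfl]
      rw [hcsucc L]
      field_simp
      ring
    have habs : |B (L+1) - B L| = (a ^ (L+1) / (Nat.factorial (L+2) : ℝ)) / (c L * c (L+1)) := by
      rw [hBdiff, abs_of_neg (by
        apply div_neg_of_neg_of_pos
        · linarith
        · positivity)]
      ring
    have hfact : (Nat.factorial (L+2) : ℝ) = ((L:ℝ)+2) * (Nat.factorial (L+1) : ℝ) := by
      rw [show L+2 = (L+1)+1 from rfl, Nat.factorial_succ]
      push_cast; ring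
    have hsum : ((L:ℝ)+2) * c L - n L = ∑ i ∈ Finset.Icc 1 L,
        a ^ i * ((L : ℝ) + 1 - (i : ℝ)) / (Nat.factorial (i + 1) : ℝ) := by
      simp only [hc, hn, Finset.mul_sum, ← Finset.sum_sub_distrib]
      apply Finset.sum_congr rfl
      intro i hi
      have hif : (Nat.factorial (i+1) : ℝ) = ((i:ℝ)+1) * (Nat.factorial i : ℝ) := by
        rw [Nat.factorial_succ]; push_cast; ring
      have h1 : (Nat.factorial i : ℝ) ≠ 0 := by positivity
      have h2 : ((i:ℝ)+1) ≠ 0 := by positivity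
      rw [hif]
      field_simp
      ring
    rw [hr L, hAn, hAn, habs, hcsucc L, hnsucc L, ← hsum]
    have hfl1 : (Nat.factorial (L+1) : ℝ) ≠ 0 := by positivity
    have hfl2 : (Nat.factorial (L+2) : ℝ) ≠ 0 := by positivity
    rw [hfact]
    field_simp
    ring
  refine ⟨key, ?_⟩
  -- strict monotonicity
  have step : ∀ L, 1 ≤ L → r L < r (L+1) := by
    intro L hL
    rw [key L hL, key (L+1) (by omega)]
    rw [Finset.sum_Icc_succ_top (show 1 ≤ L+1 by omega)]
    have hextra : (0:ℝ) < a ^ (L+1) * (((L+1:ℕ) : ℝ) + 1 - ((L+1:ℕ) : ℝ)) / (Nat.factorial (L+1+1) : ℝ) := by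
      push_cast
      have : ((L:ℝ)+1) + 1 - ((L:ℝ)+1) = 1 := by ring
      rw [this]
      positivity
    have hlt : ∑ i ∈ Finset.Icc 1 L, a ^ i * ((L : ℝ) + 1 - (i : ℝ)) / (Nat.factorial (i + 1) : ℝ)
        < ∑ i ∈ Finset.Icc 1 L, a ^ i * (((L+1:ℕ) : ℝ) + 1 - (i : ℝ)) / (Nat.factorial (i + 1) : ℝ) := by
      apply Finset.sum_lt_sum_of_nonempty ⟨1, by simp [Finset.mem_Icc, hL]⟩
      intro i hi
      have : ((L:ℝ)) + 1 - (i:ℝ) < ((L+1:ℕ) : ℝ) + 1 - (i : ℝ) := by push_cast; linarith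
      have hfi : (0:ℝ) < (Nat.factorial (i+1) : ℝ) := by positivity
      exact div_lt_div_of_pos_right (mul_lt_mul_of_pos_left this (pow_pos ha0 i)) hfi
    linarith
  have gen : ∀ x, 1 ≤ x → ∀ y, x < y → r x < r y := by
    intro x hx y hxy
    induction y, hxy using Nat.le_induction with
    | base => exact step x hx
    | succ m hm ih => exact ih.trans (step m (by omega))
  intro x hx y _ hxy
  exact gen x hx y hxy
end

section
/- For a = 1.73 and p ∈ (0, 1), the function f̃(p) = e^{ap} - ap + ln(1-p) - 1 is strictly negative. -/
open Real

lemma texp_ub (t : ℝ) (ht : |t| ≤ 1) :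
    Real.exp t ≤ 1 + t + t^2/2 + t^3/6 + t^4/24 + t^5/120 + t^6/720 + t^7/5040 + t^8/4000 := by
  have h := Real.exp_bound ht (n := 8) (by norm_num)
  have hs : ∑ m ∈ Finset.range 8, t ^ m / m.factorial
      = 1 + t + t^2/2 + t^3/6 + t^4/24 + t^5/120 + t^6/720 + t^7/5040 := by
    simp [Finset.sum_range_succ, Nat.factorial]
  rw [hs] at h
  have habs : |t|^8 = t^8 := by
    rw [← abs_pow, abs_of_nonneg]; positivity
  rw [habs] at h
  have h8 : (0:ℝ) ≤ t^8 := by positivity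
  have := (abs_le.1 h).2
  norm_num [Nat.factorial] at this
  nlinarith [this, h8]

lemma texp_lb (t : ℝ) (ht : |t| ≤ 1) :
    1 + t + t^2/2 + t^3/6 + t^4/24 + t^5/120 + t^6/720 + t^7/5040 - t^8/4000 ≤ Real.exp t := by
  have h := Real.exp_bound ht (n := 8) (by norm_num)
  have hs : ∑ m ∈ Finset.range 8, t ^ m / m.factorial
      = 1 + t + t^2/2 + t^3/6 + t^4/24 + t^5/120 + t^6/720 + t^7/5040 := by
    simp [Finset.sum_range_succ, Nat.factorial]
  rw [hs] at h
  have habs : |t|^8 = t^8 := by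
    rw [← abs_pow, abs_of_nonneg]; positivity
  rw [habs] at h
  have h8 : (0:ℝ) ≤ t^8 := by positivity
  have := (abs_le.1 h).1
  norm_num [Nat.factorial] at this
  nlinarith [this, h8]

lemma expUB2 (s B : ℝ) (hs : |s| ≤ 1)
    (hB : (1 + s + s^2/2 + s^3/6 + s^4/24 + s^5/120 + s^6/720 + s^7/5040 + s^8/4000)^2 ≤ B) :
    Real.exp (s + s) ≤ B := by
  have h := texp_ub s hs
  have h0 := (Real.exp_pos s).le
  rw [Real.exp_add]
  have hT : 0 ≤ 1 + s + s^2/2 + s^3/6 + s^4/24 + s^5/120 + s^6/720 + s^7/5040 + s^8/4000 :=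
    le_trans h0 h
  nlinarith [mul_le_mul h h h0 hT, hB]

lemma expLB2 (s B : ℝ) (hs : |s| ≤ 1)
    (hL : 0 ≤ 1 + s + s^2/2 + s^3/6 + s^4/24 + s^5/120 + s^6/720 + s^7/5040 - s^8/4000)
    (hB : B ≤ (1 + s + s^2/2 + s^3/6 + s^4/24 + s^5/120 + s^6/720 + s^7/5040 - s^8/4000)^2) :
    B ≤ Real.exp (s + s) := by
  have h := texp_lb s hs
  rw [Real.exp_add]
  nlinarith [mul_le_mul h h hL (Real.exp_pos s).le, hB]

lemma expLB4 (s B : ℝ) (hs : |s| ≤ 1)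
    (hL : 0 ≤ 1 + s + s^2/2 + s^3/6 + s^4/24 + s^5/120 + s^6/720 + s^7/5040 - s^8/4000)
    (hB : B ≤ ((1 + s + s^2/2 + s^3/6 + s^4/24 + s^5/120 + s^6/720 + s^7/5040 - s^8/4000)^2)^2) :
    B ≤ Real.exp (s + s + (s + s)) := by
  have h := expLB2 s _ hs hL (le_refl _)
  have h2 : (0:ℝ) ≤ (1 + s + s^2/2 + s^3/6 + s^4/24 + s^5/120 + s^6/720 + s^7/5040 - s^8/4000)^2 := sq_nonneg _
  rw [Real.exp_add]
  nlinarith [mul_le_mul h h h2 (Real.exp_pos (s+s)).le, hB]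

lemma regionA (p : ℝ) (hp0 : 0 < p) (hp : p ≤ 2/5) (hp1 : p < 1) :
    Real.exp (1.73 * p) - 1.73 * p + Real.log (1 - p) - 1 < 0 := by
  have hx : |1.73 * p| ≤ 1 := by rw [abs_of_nonneg (by linarith)]; linarith
  have h := texp_ub (1.73 * p) hx
  have hlog : Real.log (1 - p) ≤ -p := by
    have := Real.log_le_sub_one_of_pos (show (0:ℝ) < 1 - p by linarith)
    linarith
  have h2 : p^2 ≤ (2/5)*p := by nlinarith
  have h3 : p^3 ≤ (2/5)*p^2 := by nlinarith
  have h4 : p^4 ≤ (2/5)*p^3 := by nlinarith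
  have h5 : p^5 ≤ (2/5)*p^4 := by nlinarith
  have h6 : p^6 ≤ (2/5)*p^5 := by nlinarith
  have h7 : p^7 ≤ (2/5)*p^6 := by nlinarith
  have h8 : p^8 ≤ (2/5)*p^7 := by nlinarith
  nlinarith [h, hlog, h2, h3, h4, h5, h6, h7, h8]

lemma regionB (p : ℝ) (hp : (24/25 : ℝ) ≤ p) (hp1 : p < 1) :
    Real.exp (1.73 * p) - 1.73 * p + Real.log (1 - p) - 1 < 0 := by
  have h1p : (0:ℝ) < 1 - p := by linarith
  have hexp : Real.exp (1.73 * p) ≤ (56409853/10000000 : ℝ) := by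
    have h1 : Real.exp (1.73 * p) ≤ Real.exp ((865/1000 : ℝ) + (865/1000 : ℝ)) := by
      apply Real.exp_le_exp.2; linarith
    exact le_trans h1 (expUB2 (865/1000 : ℝ) _ (by rw [abs_le]; constructor <;> norm_num) (by norm_num))
  have hlog : Real.log (1 - p) ≤ -(16/5 : ℝ) := by
    have h1 : Real.log (1 - p) ≤ Real.log (1/25 : ℝ) :=
      (Real.log_le_log_iff h1p (by norm_num)).2 (by linarith)
    have h2 : Real.log (1/25 : ℝ) ≤ -(16/5 : ℝ) := by
      refine (Real.log_le_iff_le_exp (by norm_num)).2 ?_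
      have h : (-(16/5) : ℝ) = (-8/10 : ℝ) + (-8/10 : ℝ) + ((-8/10 : ℝ) + (-8/10 : ℝ)) := by norm_num
      rw [h]
      exact expLB4 (-8/10 : ℝ) _ (by rw [abs_le]; constructor <;> norm_num) (by norm_num) (by norm_num)
    linarith
  linarith [hexp, hlog]


lemma exp_secant (x y q : ℝ) (hx : x ≤ q) (hq : q ≤ y) (hxy : x < y) :
    (y - x) * Real.exp q ≤ (y - q) * Real.exp x + (q - x) * Real.exp y := by
  have hyx : (0:ℝ) < y - x := by linarith
  have h := convexOn_exp.2 (Set.mem_univ x) (Set.mem_univ y)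
      (show (0:ℝ) ≤ (y-q)/(y-x) from div_nonneg (by linarith) hyx.le)
      (show (0:ℝ) ≤ (q-x)/(y-x) from div_nonneg (by linarith) hyx.le)
      (by field_simp; ring)
  have harg : ((y-q)/(y-x)) • x + ((q-x)/(y-x)) • y = q := by
    simp only [smul_eq_mul]
    field_simp
    ring
  rw [harg] at h
  simp only [smul_eq_mul] at h
  have h2 := mul_le_mul_of_nonneg_left h hyx.le
  calc (y - x) * Real.exp q ≤ (y-x) * ((y-q)/(y-x) * Real.exp x + (q-x)/(y-x) * Real.exp y) := h2
    _ = (y - q) * Real.exp x + (q - x) * Real.exp y := by field_simp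

lemma step_s15 (l u m El Eu Lm k : ℝ) (hlu : l < u) (hm1 : m < 1)
    (hk : k * (1 - m) = 1)
    (hEl : Real.exp (1.73 * l) ≤ El) (hEu : Real.exp (1.73 * u) ≤ Eu)
    (hLm : Real.log (1 - m) ≤ Lm)
    (hCl : El - 1.73 * l + Lm + k * (m - l) - 1 ≤ -(1/10000))
    (hCu : Eu - 1.73 * u + Lm + k * (m - u) - 1 ≤ -(1/10000))
    (p : ℝ) (hl : l ≤ p) (hu : p ≤ u) (hp1 : p < 1) :
    Real.exp (1.73 * p) - 1.73 * p + Real.log (1 - p) - 1 < 0 := by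
  have h1m : (0:ℝ) < 1 - m := by linarith
  have h1p : (0:ℝ) < 1 - p := by linarith
  have hul : (0:ℝ) < u - l := by linarith
  -- tangent bound for log
  have hlog : Real.log (1 - p) ≤ Lm + k * (m - p) := by
    have hq := Real.log_le_sub_one_of_pos (div_pos h1p h1m)
    rw [Real.log_div h1p.ne' h1m.ne'] at hq
    have hdiv : (1-p)/(1-m) = k * (1-p) := by
      rw [eq_comm, eq_div_iff h1m.ne']
      linear_combination (1-p) * hk
    rw [hdiv] at hq
    nlinarith [hLm, hk]
  -- secant bound for exp
  have hsec0 := exp_secant (1.73*l) (1.73*u) (1.73*p) (by linarith) (by linarith) (by linarith)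
  have hsec : (u - l) * Real.exp (1.73*p) ≤ (u - p) * El + (p - l) * Eu := by
    have e1 : (u - p) * Real.exp (1.73*l) ≤ (u - p) * El :=
      mul_le_mul_of_nonneg_left hEl (by linarith)
    have e2 : (p - l) * Real.exp (1.73*u) ≤ (p - l) * Eu :=
      mul_le_mul_of_nonneg_left hEu (by linarith)
    nlinarith [hsec0, e1, e2]
  have h3 := mul_le_mul_of_nonneg_left hCl (show (0:ℝ) ≤ u - p by linarith)
  have h4 := mul_le_mul_of_nonneg_left hCu (show (0:ℝ) ≤ p - l by linarith)
  have h5 : (u - l) * Real.exp (1.73*p)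
      ≤ (u - l) * (1.73 * p - Lm - k * (m - p) + 1 - 1/10000) := by nlinarith [hsec, h3, h4]
  have hE : Real.exp (1.73*p) ≤ 1.73 * p - Lm - k * (m - p) + 1 - 1/10000 :=
    le_of_mul_le_mul_left (by linarith [h5]) hul
  linarith [hE, hlog]

lemma hexp0 : Real.exp (1.73 * (2/5 : ℝ)) ≤ (19977071/10000000 : ℝ) := by
  have h : (1.73 : ℝ) * (2/5 : ℝ) = (173/500 : ℝ) + (173/500 : ℝ) := by norm_num
  rw [h]
  exact expUB2 (173/500 : ℝ) (19977071/10000000 : ℝ) (by rw [abs_le]; constructor <;> norm_num) (by norm_num)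

lemma hexp1 : Real.exp (1.73 * (14/25 : ℝ)) ≤ (26347831/10000000 : ℝ) := by
  have h : (1.73 : ℝ) * (14/25 : ℝ) = (1211/2500 : ℝ) + (1211/2500 : ℝ) := by norm_num
  rw [h]
  exact expUB2 (1211/2500 : ℝ) (26347831/10000000 : ℝ) (by rw [abs_le]; constructor <;> norm_num) (by norm_num)

lemma hexp2 : Real.exp (1.73 * (18/25 : ℝ)) ≤ (34750381/10000000 : ℝ) := by
  have h : (1.73 : ℝ) * (18/25 : ℝ) = (1557/2500 : ℝ) + (1557/2500 : ℝ) := by norm_num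
  rw [h]
  exact expUB2 (1557/2500 : ℝ) (34750381/10000000 : ℝ) (by rw [abs_le]; constructor <;> norm_num) (by norm_num)

lemma hexp3 : Real.exp (1.73 * (19/25 : ℝ)) ≤ (18620181/5000000 : ℝ) := by
  have h : (1.73 : ℝ) * (19/25 : ℝ) = (3287/5000 : ℝ) + (3287/5000 : ℝ) := by norm_num
  rw [h]
  exact expUB2 (3287/5000 : ℝ) (18620181/5000000 : ℝ) (by rw [abs_le]; constructor <;> norm_num) (by norm_num)

lemma hexp4 : Real.exp (1.73 * (39/50 : ℝ)) ≤ (7710299/2000000 : ℝ) := by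
  have h : (1.73 : ℝ) * (39/50 : ℝ) = (6747/10000 : ℝ) + (6747/10000 : ℝ) := by norm_num
  rw [h]
  exact expUB2 (6747/10000 : ℝ) (7710299/2000000 : ℝ) (by rw [abs_le]; constructor <;> norm_num) (by norm_num)

lemma hexp5 : Real.exp (1.73 * (4/5 : ℝ)) ≤ (24943/6250 : ℝ) := by
  have h : (1.73 : ℝ) * (4/5 : ℝ) = (173/250 : ℝ) + (173/250 : ℝ) := by norm_num
  rw [h]
  exact expUB2 (173/250 : ℝ) (24943/6250 : ℝ) (by rw [abs_le]; constructor <;> norm_num) (by norm_num)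

lemma hexp6 : Real.exp (1.73 * (41/50 : ℝ)) ≤ (41313907/10000000 : ℝ) := by
  have h : (1.73 : ℝ) * (41/50 : ℝ) = (7093/10000 : ℝ) + (7093/10000 : ℝ) := by norm_num
  rw [h]
  exact expUB2 (7093/10000 : ℝ) (41313907/10000000 : ℝ) (by rw [abs_le]; constructor <;> norm_num) (by norm_num)

lemma hexp7 : Real.exp (1.73 * (83/100 : ℝ)) ≤ (4203491/1000000 : ℝ) := by
  have h : (1.73 : ℝ) * (83/100 : ℝ) = (14359/20000 : ℝ) + (14359/20000 : ℝ) := by norm_num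
  rw [h]
  exact expUB2 (14359/20000 : ℝ) (4203491/1000000 : ℝ) (by rw [abs_le]; constructor <;> norm_num) (by norm_num)

lemma hexp8 : Real.exp (1.73 * (17/20 : ℝ)) ≤ (21757449/5000000 : ℝ) := by
  have h : (1.73 : ℝ) * (17/20 : ℝ) = (2941/4000 : ℝ) + (2941/4000 : ℝ) := by norm_num
  rw [h]
  exact expUB2 (2941/4000 : ℝ) (21757449/5000000 : ℝ) (by rw [abs_le]; constructor <;> norm_num) (by norm_num)

lemma hexp9 : Real.exp (1.73 * (89/100 : ℝ)) ≤ (46633099/10000000 : ℝ) := by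
  have h : (1.73 : ℝ) * (89/100 : ℝ) = (15397/20000 : ℝ) + (15397/20000 : ℝ) := by norm_num
  rw [h]
  exact expUB2 (15397/20000 : ℝ) (46633099/10000000 : ℝ) (by rw [abs_le]; constructor <;> norm_num) (by norm_num)

lemma hexp10 : Real.exp (1.73 * (93/100 : ℝ)) ≤ (49974859/10000000 : ℝ) := by
  have h : (1.73 : ℝ) * (93/100 : ℝ) = (16089/20000 : ℝ) + (16089/20000 : ℝ) := by norm_num
  rw [h]
  exact expUB2 (16089/20000 : ℝ) (49974859/10000000 : ℝ) (by rw [abs_le]; constructor <;> norm_num) (by norm_num)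

lemma hexp11 : Real.exp (1.73 * (24/25 : ℝ)) ≤ (52637511/10000000 : ℝ) := by
  have h : (1.73 : ℝ) * (24/25 : ℝ) = (519/625 : ℝ) + (519/625 : ℝ) := by norm_num
  rw [h]
  exact expUB2 (519/625 : ℝ) (52637511/10000000 : ℝ) (by rw [abs_le]; constructor <;> norm_num) (by norm_num)

lemma hlog0 : Real.log (1 - (12/25 : ℝ)) ≤ (-326963/500000 : ℝ) := by
  refine (Real.log_le_iff_le_exp (by norm_num)).2 ?_
  have h : ((-326963/500000 : ℝ)) = (-326963/1000000 : ℝ) + (-326963/1000000 : ℝ) := by norm_num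
  rw [h]
  exact expLB2 (-326963/1000000 : ℝ) _ (by rw [abs_le]; constructor <;> norm_num) (by norm_num) (by norm_num)

lemma hlog1 : Real.log (1 - (16/25 : ℝ)) ≤ (-1021647/1000000 : ℝ) := by
  refine (Real.log_le_iff_le_exp (by norm_num)).2 ?_
  have h : ((-1021647/1000000 : ℝ)) = (-1021647/2000000 : ℝ) + (-1021647/2000000 : ℝ) := by norm_num
  rw [h]
  exact expLB2 (-1021647/2000000 : ℝ) _ (by rw [abs_le]; constructor <;> norm_num) (by norm_num) (by norm_num)

lemma hlog2 : Real.log (1 - (37/50 : ℝ)) ≤ (-336757/250000 : ℝ) := by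
  refine (Real.log_le_iff_le_exp (by norm_num)).2 ?_
  have h : ((-336757/250000 : ℝ)) = (-336757/500000 : ℝ) + (-336757/500000 : ℝ) := by norm_num
  rw [h]
  exact expLB2 (-336757/500000 : ℝ) _ (by rw [abs_le]; constructor <;> norm_num) (by norm_num) (by norm_num)

lemma hlog3 : Real.log (1 - (77/100 : ℝ)) ≤ (-1469579/1000000 : ℝ) := by
  refine (Real.log_le_iff_le_exp (by norm_num)).2 ?_
  have h : ((-1469579/1000000 : ℝ)) = (-1469579/2000000 : ℝ) + (-1469579/2000000 : ℝ) := by norm_num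
  rw [h]
  exact expLB2 (-1469579/2000000 : ℝ) _ (by rw [abs_le]; constructor <;> norm_num) (by norm_num) (by norm_num)

lemma hlog4 : Real.log (1 - (79/100 : ℝ)) ≤ (-390121/250000 : ℝ) := by
  refine (Real.log_le_iff_le_exp (by norm_num)).2 ?_
  have h : ((-390121/250000 : ℝ)) = (-390121/500000 : ℝ) + (-390121/500000 : ℝ) := by norm_num
  rw [h]
  exact expLB2 (-390121/500000 : ℝ) _ (by rw [abs_le]; constructor <;> norm_num) (by norm_num) (by norm_num)

lemma hlog5 : Real.log (1 - (81/100 : ℝ)) ≤ (-51889/31250 : ℝ) := by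
  refine (Real.log_le_iff_le_exp (by norm_num)).2 ?_
  have h : ((-51889/31250 : ℝ)) = (-51889/62500 : ℝ) + (-51889/62500 : ℝ) := by norm_num
  rw [h]
  exact expLB2 (-51889/62500 : ℝ) _ (by rw [abs_le]; constructor <;> norm_num) (by norm_num) (by norm_num)

lemma hlog6 : Real.log (1 - (33/40 : ℝ)) ≤ (-217817/125000 : ℝ) := by
  refine (Real.log_le_iff_le_exp (by norm_num)).2 ?_
  have h : ((-217817/125000 : ℝ)) = (-217817/250000 : ℝ) + (-217817/250000 : ℝ) := by norm_num
  rw [h]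
  exact expLB2 (-217817/250000 : ℝ) _ (by rw [abs_le]; constructor <;> norm_num) (by norm_num) (by norm_num)

lemma hlog7 : Real.log (1 - (21/25 : ℝ)) ≤ (-915953/500000 : ℝ) := by
  refine (Real.log_le_iff_le_exp (by norm_num)).2 ?_
  have h : ((-915953/500000 : ℝ)) = (-915953/1000000 : ℝ) + (-915953/1000000 : ℝ) := by norm_num
  rw [h]
  exact expLB2 (-915953/1000000 : ℝ) _ (by rw [abs_le]; constructor <;> norm_num) (by norm_num) (by norm_num)

lemma hlog8 : Real.log (1 - (87/100 : ℝ)) ≤ (-510053/250000 : ℝ) := by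
  refine (Real.log_le_iff_le_exp (by norm_num)).2 ?_
  have h : ((-510053/250000 : ℝ)) = (-510053/1000000 : ℝ) + (-510053/1000000 : ℝ) + ((-510053/1000000 : ℝ) + (-510053/1000000 : ℝ)) := by norm_num
  rw [h]
  exact expLB4 (-510053/1000000 : ℝ) _ (by rw [abs_le]; constructor <;> norm_num) (by norm_num) (by norm_num)

lemma hlog9 : Real.log (1 - (91/100 : ℝ)) ≤ (-2407911/1000000 : ℝ) := by
  refine (Real.log_le_iff_le_exp (by norm_num)).2 ?_
  have h : ((-2407911/1000000 : ℝ)) = (-2407911/4000000 : ℝ) + (-2407911/4000000 : ℝ) + ((-2407911/4000000 : ℝ) + (-2407911/4000000 : ℝ)) := by norm_num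
  rw [h]
  exact expLB4 (-2407911/4000000 : ℝ) _ (by rw [abs_le]; constructor <;> norm_num) (by norm_num) (by norm_num)

lemma hlog10 : Real.log (1 - (189/200 : ℝ)) ≤ (-2900249/1000000 : ℝ) := by
  refine (Real.log_le_iff_le_exp (by norm_num)).2 ?_
  have h : ((-2900249/1000000 : ℝ)) = (-2900249/4000000 : ℝ) + (-2900249/4000000 : ℝ) + ((-2900249/4000000 : ℝ) + (-2900249/4000000 : ℝ)) := by norm_num
  rw [h]
  exact expLB4 (-2900249/4000000 : ℝ) _ (by rw [abs_le]; constructor <;> norm_num) (by norm_num) (by norm_num)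



theorem stmt_15 (p : ℝ) (hp : p ∈ Set.Ioo (0 : ℝ) 1) :
    Real.exp (1.73 * p) - 1.73 * p + Real.log (1 - p) - 1 < 0 := by

  obtain ⟨hp0, hp1⟩ := hp
  rcases le_or_gt p (2/5 : ℝ) with h|h
  · exact regionA p hp0 h hp1
  rcases le_or_gt p (14/25 : ℝ) with h'|h'
  · exact step_s15 (2/5 : ℝ) (14/25 : ℝ) (12/25 : ℝ) (19977071/10000000 : ℝ) (26347831/10000000 : ℝ) (-326963/500000 : ℝ) (25/13 : ℝ) (by norm_num) (by norm_num) (by norm_num) hexp0 hexp1 hlog0 (by norm_num) (by norm_num) p (by linarith) h' hp1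
  clear h
  have h := h'; clear h'
  rcases le_or_gt p (18/25 : ℝ) with h'|h'
  · exact step_s15 (14/25 : ℝ) (18/25 : ℝ) (16/25 : ℝ) (26347831/10000000 : ℝ) (34750381/10000000 : ℝ) (-1021647/1000000 : ℝ) (25/9 : ℝ) (by norm_num) (by norm_num) (by norm_num) hexp1 hexp2 hlog1 (by norm_num) (by norm_num) p (by linarith) h' hp1
  clear h
  have h := h'; clear h'
  rcases le_or_gt p (19/25 : ℝ) with h'|h'
  · exact step_s15 (18/25 : ℝ) (19/25 : ℝ) (37/50 : ℝ) (34750381/10000000 : ℝ) (18620181/5000000 : ℝ) (-336757/250000 : ℝ) (50/13 : ℝ) (by norm_num) (by norm_num) (by norm_num) hexp2 hexp3 hlog2 (by norm_num) (by norm_num) p (by linarith) h' hp1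
  clear h
  have h := h'; clear h'
  rcases le_or_gt p (39/50 : ℝ) with h'|h'
  · exact step_s15 (19/25 : ℝ) (39/50 : ℝ) (77/100 : ℝ) (18620181/5000000 : ℝ) (7710299/2000000 : ℝ) (-1469579/1000000 : ℝ) (100/23 : ℝ) (by norm_num) (by norm_num) (by norm_num) hexp3 hexp4 hlog3 (by norm_num) (by norm_num) p (by linarith) h' hp1
  clear h
  have h := h'; clear h'
  rcases le_or_gt p (4/5 : ℝ) with h'|h'
  · exact step_s15 (39/50 : ℝ) (4/5 : ℝ) (79/100 : ℝ) (7710299/2000000 : ℝ) (24943/6250 : ℝ) (-390121/250000 : ℝ) (100/21 : ℝ) (by norm_num) (by norm_num) (by norm_num) hexp4 hexp5 hlog4 (by norm_num) (by norm_num) p (by linarith) h' hp1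
  clear h
  have h := h'; clear h'
  rcases le_or_gt p (41/50 : ℝ) with h'|h'
  · exact step_s15 (4/5 : ℝ) (41/50 : ℝ) (81/100 : ℝ) (24943/6250 : ℝ) (41313907/10000000 : ℝ) (-51889/31250 : ℝ) (100/19 : ℝ) (by norm_num) (by norm_num) (by norm_num) hexp5 hexp6 hlog5 (by norm_num) (by norm_num) p (by linarith) h' hp1
  clear h
  have h := h'; clear h'
  rcases le_or_gt p (83/100 : ℝ) with h'|h'
  · exact step_s15 (41/50 : ℝ) (83/100 : ℝ) (33/40 : ℝ) (41313907/10000000 : ℝ) (4203491/1000000 : ℝ) (-217817/125000 : ℝ) (40/7 : ℝ) (by norm_num) (by norm_num) (by norm_num) hexp6 hexp7 hlog6 (by norm_num) (by norm_num) p (by linarith) h' hp1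
  clear h
  have h := h'; clear h'
  rcases le_or_gt p (17/20 : ℝ) with h'|h'
  · exact step_s15 (83/100 : ℝ) (17/20 : ℝ) (21/25 : ℝ) (4203491/1000000 : ℝ) (21757449/5000000 : ℝ) (-915953/500000 : ℝ) (25/4 : ℝ) (by norm_num) (by norm_num) (by norm_num) hexp7 hexp8 hlog7 (by norm_num) (by norm_num) p (by linarith) h' hp1
  clear h
  have h := h'; clear h'
  rcases le_or_gt p (89/100 : ℝ) with h'|h'
  · exact step_s15 (17/20 : ℝ) (89/100 : ℝ) (87/100 : ℝ) (21757449/5000000 : ℝ) (46633099/10000000 : ℝ) (-510053/250000 : ℝ) (100/13 : ℝ) (by norm_num) (by norm_num) (by norm_num) hexp8 hexp9 hlog8 (by norm_num) (by norm_num) p (by linarith) h' hp1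
  clear h
  have h := h'; clear h'
  rcases le_or_gt p (93/100 : ℝ) with h'|h'
  · exact step_s15 (89/100 : ℝ) (93/100 : ℝ) (91/100 : ℝ) (46633099/10000000 : ℝ) (49974859/10000000 : ℝ) (-2407911/1000000 : ℝ) (100/9 : ℝ) (by norm_num) (by norm_num) (by norm_num) hexp9 hexp10 hlog9 (by norm_num) (by norm_num) p (by linarith) h' hp1
  clear h
  have h := h'; clear h'
  rcases le_or_gt p (24/25 : ℝ) with h'|h'
  · exact step_s15 (93/100 : ℝ) (24/25 : ℝ) (189/200 : ℝ) (49974859/10000000 : ℝ) (52637511/10000000 : ℝ) (-2900249/1000000 : ℝ) (200/11 : ℝ) (by norm_num) (by norm_num) (by norm_num) hexp10 hexp11 hlog10 (by norm_num) (by norm_num) p (by linarith) h' hp1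
  clear h
  have h := h'; clear h'
  exact regionB p (by linarith) hp1
end
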